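/- Let G be a group with an Abelian subgroup H of index 2, G = ⟨H, b⟩, and K a commutative ring. Define σ: G → G by σ(b) = b, σ(h) = b⁻¹hb for h ∈ H (an anti-automorphism of order 2, assuming bhb⁻¹ = b⁻¹hb for all h ∈ H), and f: G → U(K) by f(h) = 1 for h ∈ H and f(b) = -1. Then the group ring KG satisfies xx^σ = x^σx for all x ∈ KG, where x^σ = Σ α_g f(g)σ(g). -/

import Mathlib

noncomputable def sigmaMap {K G : Type*} [CommRing K] [Group G] (σ : G → G) (f : G →* Kˣ)
    (x : MonoidAlgebra K G) : MonoidAlgebra K G :=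
  Finsupp.sum x.coeff fun g a => MonoidAlgebra.single (σ g) (a * (f g : K))

theorem stmt_12 {K G : Type*} [CommRing K] [Group G] (H : Subgroup G) (b : G)
    (hHab : ∀ x ∈ H, ∀ y ∈ H, x * y = y * x)
    (hind : H.index = 2)
    (hgen : H ⊔ Subgroup.closure {b} = ⊤)
    (hconj : ∀ h ∈ H, b * h * b⁻¹ = b⁻¹ * h * b)
    (σ : G → G)
    (hanti : ∀ g h : G, σ (g * h) = σ h * σ g)
    (hσb : σ b = b)
    (hσH : ∀ h ∈ H, σ h = b⁻¹ * h * b)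
    (f : G →* Kˣ)
    (hfH : ∀ h ∈ H, f h = 1) (hfb : f b = -1) :
    ∀ x : MonoidAlgebra K G, x * sigmaMap σ f x = sigmaMap σ f x * x := by
  classical
  -- b is not in H
  have hbH : b ∉ H := by
    intro hb
    have hcl : Subgroup.closure ({b} : Set G) ≤ H := by
      rw [Subgroup.closure_le]; simpa using hb
    have : H = ⊤ := by rw [← hgen, sup_eq_left.mpr hcl]
    rw [this, Subgroup.index_top] at hind
    omega
  -- conjugation by b preserves H
  have hnorm : ∀ g ∈ H, b⁻¹ * g * b ∈ H := by
    intro g hg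
    rw [Subgroup.mul_mem_iff_of_index_two hind,
      Subgroup.mul_mem_iff_of_index_two hind, inv_mem_iff]
    simp [hg]
  -- decomposition of elements outside H
  have hmemB : ∀ w : G, w ∉ H → ∃ u ∈ H, w = u * b := by
    intro w hw
    refine ⟨w * b⁻¹, ?_, by group⟩
    rw [Subgroup.mul_mem_iff_of_index_two hind, inv_mem_iff]
    simp [hw, hbH]
  -- σ fixes elements outside H
  have hσw : ∀ w : G, w ∉ H → σ w = w := by
    intro w hw
    obtain ⟨u, hu, rfl⟩ := hmemB w hw
    rw [hanti, hσb, hσH u hu]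
    group
  -- f is -1 outside H
  have hfw : ∀ w : G, w ∉ H → f w = -1 := by
    intro w hw
    obtain ⟨u, hu, rfl⟩ := hmemB w hw
    rw [map_mul, hfH u hu, hfb, one_mul]
  -- σ preserves H
  have hσmem : ∀ g ∈ H, σ g ∈ H := by
    intro g hg; rw [hσH g hg]; exact hnorm g hg
  -- commutation identities
  have hcommH : ∀ g ∈ H, ∀ h ∈ H, g * σ h = σ h * g := by
    intro g hg h hh; exact hHab g hg (σ h) (hσmem h hh)
  have hcomm1 : ∀ g ∈ H, ∀ w : G, w ∉ H → w * σ g = g * w := by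
    intro g hg w hw
    obtain ⟨u, hu, rfl⟩ := hmemB w hw
    rw [hσH g hg, ← mul_assoc, ← mul_assoc, mul_assoc u b b⁻¹, mul_inv_cancel, mul_one,
      ← mul_assoc, hHab u hu g hg]
  have hcomm2 : ∀ g ∈ H, ∀ w : G, w ∉ H → σ g * w = w * g := by
    intro g hg w hw
    obtain ⟨u, hu, rfl⟩ := hmemB w hw
    have hσg : σ g = b * g * b⁻¹ := by rw [hσH g hg, ← hconj g hg]
    rw [← mul_assoc, hHab (σ g) (hσmem g hg) u hu, hσg]
    group
  intro x
  set s := x.coeff.support with hs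
  have hx : x = ∑ g ∈ s, MonoidAlgebra.single g (x.coeff g) := by
    conv_lhs => rw [← MonoidAlgebra.sum_coeff_single x]
    rfl
  have hsig : sigmaMap σ f x = ∑ h ∈ s, MonoidAlgebra.single (σ h) (x.coeff h * (f h : K)) := rfl
  have hneg : ∀ (p : G) (c : K),
      MonoidAlgebra.single p (-c) = - MonoidAlgebra.single p c :=
    fun p c => MonoidAlgebra.single_neg p c
  set T1 : G → G → MonoidAlgebra K G :=
    fun g h => MonoidAlgebra.single (g * σ h) (x.coeff g * (x.coeff h * (f h : K))) with hT1
  set T2 : G → G → MonoidAlgebra K G :=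
    fun h g => MonoidAlgebra.single (σ h * g) (x.coeff h * (f h : K) * x.coeff g) with hT2
  have L : x * sigmaMap σ f x = ∑ g ∈ s, ∑ h ∈ s, T1 g h := by
    rw [hsig]
    nth_rewrite 1 [hx]
    rw [Finset.sum_mul_sum]
    simp only [MonoidAlgebra.single_mul_single, hT1]
  have R : sigmaMap σ f x * x = ∑ h ∈ s, ∑ g ∈ s, T2 h g := by
    rw [hsig]
    nth_rewrite 2 [hx]
    rw [Finset.sum_mul_sum]
    simp only [MonoidAlgebra.single_mul_single, hT2]
  rw [L, R, Finset.sum_comm (f := fun h g => T2 h g)]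
  -- split into filters
  set A := s.filter (fun g => g ∈ H) with hA
  set B := s.filter (fun g => g ∉ H) with hB
  have split : ∀ T : G → G → MonoidAlgebra K G,
      ∑ g ∈ s, ∑ h ∈ s, T g h =
      ((∑ g ∈ A, ∑ h ∈ A, T g h + ∑ g ∈ A, ∑ h ∈ B, T g h) +
       (∑ g ∈ B, ∑ h ∈ A, T g h + ∑ g ∈ B, ∑ h ∈ B, T g h)) := by
    intro T
    rw [← Finset.sum_filter_add_sum_filter_not s (fun g => g ∈ H)
      (fun g => ∑ h ∈ s, T g h)]
    congr 1 <;>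
    · rw [← Finset.sum_add_distrib]
      exact Finset.sum_congr rfl fun g _ =>
        (Finset.sum_filter_add_sum_filter_not s (fun h => h ∈ H) (T g)).symm
  rw [split, split]
  -- memberships
  have memA : ∀ g ∈ A, g ∈ H := fun g hg => (Finset.mem_filter.mp hg).2
  have memB : ∀ g ∈ B, g ∉ H := fun g hg => (Finset.mem_filter.mp hg).2
  -- AA terms equal termwise
  have eAA : ∑ g ∈ A, ∑ h ∈ A, T1 g h = ∑ g ∈ A, ∑ h ∈ A, T2 h g := by
    refine Finset.sum_congr rfl fun g hg => Finset.sum_congr rfl fun h hh => ?_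
    simp only [hT1, hT2]
    rw [hcommH g (memA g hg) h (memA h hh)]
    ring_nf
  -- BB sums equal via swap
  have eBB : ∑ g ∈ B, ∑ h ∈ B, T1 g h = ∑ g ∈ B, ∑ h ∈ B, T2 h g := by
    rw [Finset.sum_comm (f := fun g h => T1 g h)]
    refine Finset.sum_congr rfl fun h hh => Finset.sum_congr rfl fun g hg => ?_
    simp only [hT1, hT2]
    rw [hσw g (memB g hg), hσw h (memB h hh), hfw g (memB g hg), hfw h (memB h hh)]
    push_cast
    ring_nf
  -- cross terms cancel for T1
  have eC1 : ∑ g ∈ A, ∑ h ∈ B, T1 g h + ∑ g ∈ B, ∑ h ∈ A, T1 g h = 0 := by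
    have : ∑ g ∈ B, ∑ h ∈ A, T1 g h = ∑ g ∈ A, ∑ h ∈ B, (- T1 g h) := by
      rw [Finset.sum_comm]
      refine Finset.sum_congr rfl fun g hg => Finset.sum_congr rfl fun h hh => ?_
      simp only [hT1]
      rw [hσw h (memB h hh), hfw h (memB h hh), hfH g (memA g hg),
        hcomm1 g (memA g hg) h (memB h hh)]
      push_cast
      rw [show x.coeff g * (x.coeff h * (-1 : K)) = -(x.coeff h * (x.coeff g * 1)) by ring, hneg, neg_neg]
    rw [this, ← Finset.sum_add_distrib]
    simp
  -- cross terms cancel for T2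
  have eC2 : ∑ g ∈ A, ∑ h ∈ B, T2 h g + ∑ g ∈ B, ∑ h ∈ A, T2 h g = 0 := by
    have : ∑ g ∈ B, ∑ h ∈ A, T2 h g = ∑ g ∈ A, ∑ h ∈ B, (- T2 h g) := by
      rw [Finset.sum_comm]
      refine Finset.sum_congr rfl fun g hg => Finset.sum_congr rfl fun h hh => ?_
      simp only [hT2]
      rw [hσw h (memB h hh), hfw h (memB h hh), hfH g (memA g hg),
        hcomm2 g (memA g hg) h (memB h hh)]
      push_cast
      rw [show x.coeff h * (-1 : K) * x.coeff g = -(x.coeff g * 1 * x.coeff h) by ring, hneg, neg_neg]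
    rw [this, ← Finset.sum_add_distrib]
    simp
  calc (∑ g ∈ A, ∑ h ∈ A, T1 g h + ∑ g ∈ A, ∑ h ∈ B, T1 g h) +
       (∑ g ∈ B, ∑ h ∈ A, T1 g h + ∑ g ∈ B, ∑ h ∈ B, T1 g h)
      = ∑ g ∈ A, ∑ h ∈ A, T1 g h + ∑ g ∈ B, ∑ h ∈ B, T1 g h +
        (∑ g ∈ A, ∑ h ∈ B, T1 g h + ∑ g ∈ B, ∑ h ∈ A, T1 g h) := by abel
    _ = ∑ g ∈ A, ∑ h ∈ A, T2 h g + ∑ g ∈ B, ∑ h ∈ B, T2 h g +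
        (∑ g ∈ A, ∑ h ∈ B, T2 h g + ∑ g ∈ B, ∑ h ∈ A, T2 h g) := by
          rw [eAA, eBB, eC1, eC2]
    _ = _ := by abel
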